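/- Let z : [0,∞) × [0,L] → ℝ³ be a smooth solution of the linearized controlled Landau–Lifshitz equation ∂z/∂t = ν z_xx + a × z_xx + k(r - z) with Neumann boundary conditions z_x(0,t) = z_x(L,t) = 0, where ν ≥ 0, k > 0, and a, r ∈ ℝ³ constants. Then the function V(t) = ½‖z(·,t) - r‖²_{L²} satisfies V'(t) = -ν‖z_x(·,t)‖²_{L²} - k‖z(·,t) - r‖²_{L²} ≤ -2kV(t), and hence ‖z(·,t) - r‖²_{L²} ≤ e^{-2kt}‖z(·,0) - r‖²_{L²}. -/

import Mathlib

open Matrix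

lemma hasDerivAt_dot3 {f g : ℝ → Fin 3 → ℝ} {f' g' : Fin 3 → ℝ} {x : ℝ}
    (hf : HasDerivAt f f' x) (hg : HasDerivAt g g' x) :
    HasDerivAt (fun y => f y ⬝ᵥ g y) (f' ⬝ᵥ g x + f x ⬝ᵥ g') x := by
  have h : ∀ i ∈ Finset.univ, HasDerivAt (fun y => f y i * g y i)
      (f' i * g x i + f x i * g' i) x :=
    fun i _ => (hasDerivAt_pi.mp hf i).mul (hasDerivAt_pi.mp hg i)
  have := HasDerivAt.fun_sum h
  simpa [dotProduct, Finset.sum_add_distrib] using this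

lemma hasDerivAt_cross3 {a : Fin 3 → ℝ} {g : ℝ → Fin 3 → ℝ} {g' : Fin 3 → ℝ} {x : ℝ}
    (hg : HasDerivAt g g' x) : HasDerivAt (fun y => a ⨯₃ g y) (a ⨯₃ g') x := by
  have h := ((LinearMap.toContinuousLinearMap
      (crossProduct a)).hasFDerivAt (x := g x)).comp_hasDerivAt x hg
  exact h

lemma cross_continuous3 {a : Fin 3 → ℝ} {X : Type*} [TopologicalSpace X] {g : X → Fin 3 → ℝ}
    (hg : Continuous g) : Continuous fun p => a ⨯₃ g p :=
  (LinearMap.continuous_of_finiteDimensional (crossProduct a)).comp hg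

lemma dot_self_nonneg3 (v : Fin 3 → ℝ) : 0 ≤ v ⬝ᵥ v :=
  Finset.sum_nonneg fun i _ => mul_self_nonneg (v i)

/-- Theorem 9 of the paper: for a smooth solution `z` of the linearized controlled
Landau–Lifshitz equation `z_t = ν z_xx + a × z_xx + k(r - z)` with Neumann boundary
conditions, the Lyapunov function `V(t) = ½‖z(·,t) - r‖²_{L²}` satisfies
`V'(t) = -ν‖z_x‖² - k‖z - r‖² ≤ -2kV(t)`, hence
`‖z(·,t) - r‖² ≤ e^{-2kt}‖z(·,0) - r‖²`. -/
theorem stmt10 (L ν k : ℝ) (hL : 0 < L) (hν : 0 ≤ ν) (hk : 0 < k)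
    (a r : Fin 3 → ℝ) (z zt zx zxx : ℝ → ℝ → Fin 3 → ℝ)
    (hzt : ∀ t x, HasDerivAt (fun s => z s x) (zt t x) t)
    (hzx : ∀ t x, HasDerivAt (fun y => z t y) (zx t x) x)
    (hzxx : ∀ t x, HasDerivAt (fun y => zx t y) (zxx t x) x)
    (hcont : Continuous fun p : ℝ × ℝ => (z p.1 p.2, zt p.1 p.2, zx p.1 p.2, zxx p.1 p.2))
    (hpde : ∀ t x, zt t x = ν • zxx t x + a ⨯₃ zxx t x + k • (r - z t x))
    (hbc : ∀ t, zx t 0 = 0 ∧ zx t L = 0) :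
    (∀ t : ℝ,
      HasDerivAt (fun s => (1 / 2) * ∫ x in (0:ℝ)..L, (z s x - r) ⬝ᵥ (z s x - r))
        (-(ν * ∫ x in (0:ℝ)..L, zx t x ⬝ᵥ zx t x) -
          k * ∫ x in (0:ℝ)..L, (z t x - r) ⬝ᵥ (z t x - r)) t ∧
      -(ν * ∫ x in (0:ℝ)..L, zx t x ⬝ᵥ zx t x) -
          k * ∫ x in (0:ℝ)..L, (z t x - r) ⬝ᵥ (z t x - r) ≤
        -2 * k * ((1 / 2) * ∫ x in (0:ℝ)..L, (z t x - r) ⬝ᵥ (z t x - r))) ∧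
    (∀ t : ℝ, 0 ≤ t →
      (∫ x in (0:ℝ)..L, (z t x - r) ⬝ᵥ (z t x - r)) ≤
        Real.exp (-2 * k * t) * ∫ x in (0:ℝ)..L, (z 0 x - r) ⬝ᵥ (z 0 x - r)) := by
  -- joint continuity of the components
  have hz_c : Continuous fun p : ℝ × ℝ => z p.1 p.2 := hcont.fst
  have hzt_c : Continuous fun p : ℝ × ℝ => zt p.1 p.2 := hcont.snd.fst
  have hzx_c : Continuous fun p : ℝ × ℝ => zx p.1 p.2 := hcont.snd.snd.fst
  -- abbreviations
  have hFc : Continuous fun p : ℝ × ℝ => (z p.1 p.2 - r) ⬝ᵥ (z p.1 p.2 - r) :=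
    (hz_c.sub continuous_const).dotProduct (hz_c.sub continuous_const)
  have hF'c : Continuous fun p : ℝ × ℝ => 2 * ((z p.1 p.2 - r) ⬝ᵥ zt p.1 p.2) :=
    continuous_const.mul ((hz_c.sub continuous_const).dotProduct hzt_c)
  have hFx : ∀ s : ℝ, Continuous fun x => (z s x - r) ⬝ᵥ (z s x - r) := fun s =>
    hFc.comp (continuous_const.prodMk continuous_id)
  have hF'x : ∀ s : ℝ, Continuous fun x => 2 * ((z s x - r) ⬝ᵥ zt s x) := fun s =>
    hF'c.comp (continuous_const.prodMk continuous_id)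
  have hzxx2 : ∀ t : ℝ, Continuous fun x => zx t x ⬝ᵥ zx t x := fun t => by
    have h : Continuous fun x => zx t x := hzx_c.comp (continuous_const.prodMk continuous_id)
    exact h.dotProduct h
  -- time derivative of the integrand
  have hFt : ∀ t x : ℝ,
      HasDerivAt (fun s => (z s x - r) ⬝ᵥ (z s x - r)) (2 * ((z t x - r) ⬝ᵥ zt t x)) t := by
    intro t x
    have h := hasDerivAt_dot3 ((hzt t x).sub_const r) ((hzt t x).sub_const r)
    have e : zt t x ⬝ᵥ (z t x - r) + (z t x - r) ⬝ᵥ zt t x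
        = 2 * ((z t x - r) ⬝ᵥ zt t x) := by
      rw [dotProduct_comm]; ring
    rwa [e] at h
  -- differentiation under the integral sign
  have key : ∀ t : ℝ,
      HasDerivAt (fun s => ∫ x in (0:ℝ)..L, (z s x - r) ⬝ᵥ (z s x - r))
        (∫ x in (0:ℝ)..L, 2 * ((z t x - r) ⬝ᵥ zt t x)) t := by
    intro t
    obtain ⟨C, hC⟩ := ((isCompact_Icc (a := t - 1) (b := t + 1)).prod
      (isCompact_Icc (a := (0:ℝ)) (b := L))).exists_bound_of_continuousOn hF'c.continuousOn
    have h := intervalIntegral.hasDerivAt_integral_of_dominated_loc_of_deriv_le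
      (F := fun s x => (z s x - r) ⬝ᵥ (z s x - r))
      (F' := fun s x => 2 * ((z s x - r) ⬝ᵥ zt s x))
      (x₀ := t) (a := (0:ℝ)) (b := L) (μ := MeasureTheory.volume) (bound := fun _ => C) (s := Metric.ball t 1) (Metric.ball_mem_nhds t one_pos)
      (Filter.Eventually.of_forall fun s => ((hFx s).aestronglyMeasurable).restrict)
      ((hFx t).intervalIntegrable 0 L)
      ((hF'x t).aestronglyMeasurable.restrict)
      (Filter.Eventually.of_forall fun x hx s hs => by
        have hx' : x ∈ Set.Icc (0:ℝ) L := by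
          rw [Set.uIoc_of_le hL.le] at hx
          exact ⟨hx.1.le, hx.2⟩
        have hs' : s ∈ Set.Icc (t - 1) (t + 1) := by
          rw [Metric.mem_ball, Real.dist_eq, abs_lt] at hs
          constructor <;> linarith [hs.1, hs.2]
        exact hC (s, x) ⟨hs', hx'⟩)
      (intervalIntegrable_const)
      (Filter.Eventually.of_forall fun x _ s _ => hFt s x)
    exact h.2
  -- the main derivative identity and inequality
  have main : ∀ t : ℝ,
      HasDerivAt (fun s => (1 / 2) * ∫ x in (0:ℝ)..L, (z s x - r) ⬝ᵥ (z s x - r))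
        (-(ν * ∫ x in (0:ℝ)..L, zx t x ⬝ᵥ zx t x) -
          k * ∫ x in (0:ℝ)..L, (z t x - r) ⬝ᵥ (z t x - r)) t ∧
      -(ν * ∫ x in (0:ℝ)..L, zx t x ⬝ᵥ zx t x) -
          k * ∫ x in (0:ℝ)..L, (z t x - r) ⬝ᵥ (z t x - r) ≤
        -2 * k * ((1 / 2) * ∫ x in (0:ℝ)..L, (z t x - r) ⬝ᵥ (z t x - r)) := by
    intro t
    -- integration by parts via an exact derivative
    have hG : ∀ x : ℝ, HasDerivAt
        (fun y => 2 * ν * ((z t y - r) ⬝ᵥ zx t y) + 2 * ((z t y - r) ⬝ᵥ (a ⨯₃ zx t y)))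
        (2 * ((z t x - r) ⬝ᵥ zt t x) + 2 * ν * (zx t x ⬝ᵥ zx t x)
          + 2 * k * ((z t x - r) ⬝ᵥ (z t x - r))) x := by
      intro x
      have h1 := hasDerivAt_dot3 ((hzx t x).sub_const r) (hzxx t x)
      have h2 := hasDerivAt_dot3 ((hzx t x).sub_const r) (hasDerivAt_cross3 (a := a) (hzxx t x))
      have h := (h1.const_mul (2 * ν)).add (h2.const_mul 2)
      have e : 2 * ν * (zx t x ⬝ᵥ zx t x + (z t x - r) ⬝ᵥ zxx t x)
          + 2 * (zx t x ⬝ᵥ (a ⨯₃ zx t x) + (z t x - r) ⬝ᵥ (a ⨯₃ zxx t x))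
          = 2 * ((z t x - r) ⬝ᵥ zt t x) + 2 * ν * (zx t x ⬝ᵥ zx t x)
            + 2 * k * ((z t x - r) ⬝ᵥ (z t x - r)) := by
        rw [hpde t x]
        have hr : r - z t x = -(z t x - r) := by ring
        simp only [dotProduct_add, dotProduct_smul, smul_eq_mul, dot_cross_self, hr,
          dotProduct_neg]
        ring
      rwa [e] at h
    have hbc0 := (hbc t).1
    have hbcL := (hbc t).2
    -- continuity of the derivative of G
    have hGcont : Continuous fun x => 2 * ((z t x - r) ⬝ᵥ zt t x) + 2 * ν * (zx t x ⬝ᵥ zx t x)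
        + 2 * k * ((z t x - r) ⬝ᵥ (z t x - r)) :=
      ((hF'x t).add (continuous_const.mul (hzxx2 t))).add (continuous_const.mul (hFx t))
    have hFTC := intervalIntegral.integral_eq_sub_of_hasDerivAt
      (f := fun y => 2 * ν * ((z t y - r) ⬝ᵥ zx t y) + 2 * ((z t y - r) ⬝ᵥ (a ⨯₃ zx t y)))
      (fun x _ => hG x) (hGcont.intervalIntegrable 0 L)
    have hzero : (∫ x in (0:ℝ)..L, (2 * ((z t x - r) ⬝ᵥ zt t x) + 2 * ν * (zx t x ⬝ᵥ zx t x)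
        + 2 * k * ((z t x - r) ⬝ᵥ (z t x - r)))) = 0 := by
      rw [hFTC]; simp [hbc0, hbcL]
    have hi1 : IntervalIntegrable (fun x => 2 * ((z t x - r) ⬝ᵥ zt t x)) MeasureTheory.volume 0 L :=
      (hF'x t).intervalIntegrable 0 L
    have hi2 : IntervalIntegrable (fun x => 2 * ν * (zx t x ⬝ᵥ zx t x)) MeasureTheory.volume 0 L :=
      (continuous_const.mul (hzxx2 t)).intervalIntegrable 0 L
    have hi3 : IntervalIntegrable (fun x => 2 * k * ((z t x - r) ⬝ᵥ (z t x - r)))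
        MeasureTheory.volume 0 L :=
      (continuous_const.mul (hFx t)).intervalIntegrable 0 L
    rw [intervalIntegral.integral_add (hi1.add hi2) hi3,
      intervalIntegral.integral_add hi1 hi2, intervalIntegral.integral_const_mul,
      intervalIntegral.integral_const_mul, intervalIntegral.integral_const_mul] at hzero
    have hD := (key t).const_mul (1 / 2 : ℝ)
    rw [intervalIntegral.integral_const_mul] at hD
    have hEq : (1 / 2 : ℝ) * (2 * ∫ x in (0:ℝ)..L, (z t x - r) ⬝ᵥ zt t x)
        = -(ν * ∫ x in (0:ℝ)..L, zx t x ⬝ᵥ zx t x) -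
          k * ∫ x in (0:ℝ)..L, (z t x - r) ⬝ᵥ (z t x - r) := by
      linarith [hzero]
    rw [hEq] at hD
    refine ⟨hD, ?_⟩
    have hI1 : 0 ≤ ∫ x in (0:ℝ)..L, zx t x ⬝ᵥ zx t x :=
      intervalIntegral.integral_nonneg hL.le fun x _ => dot_self_nonneg3 _
    have := mul_nonneg hν hI1
    nlinarith
  refine ⟨main, ?_⟩
  -- Gronwall step
  intro t ht
  set V : ℝ → ℝ := fun s => (1 / 2) * ∫ x in (0:ℝ)..L, (z s x - r) ⬝ᵥ (z s x - r) with hV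
  have hh : ∀ s : ℝ, HasDerivAt (fun u => Real.exp (2 * k * u) * V u)
      (Real.exp (2 * k * s) * (2 * k) * V s + Real.exp (2 * k * s) *
        (-(ν * ∫ x in (0:ℝ)..L, zx s x ⬝ᵥ zx s x) -
          k * ∫ x in (0:ℝ)..L, (z s x - r) ⬝ᵥ (z s x - r))) s := by
    intro s
    have hexp : HasDerivAt (fun u => Real.exp (2 * k * u)) (Real.exp (2 * k * s) * (2 * k)) s := by
      simpa using ((hasDerivAt_id s).const_mul (2 * k)).exp
    exact hexp.mul (main s).1
  have hanti : Antitone fun u => Real.exp (2 * k * u) * V u := by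
    apply antitone_of_deriv_nonpos
    · exact fun s => (hh s).differentiableAt
    · intro s
      rw [(hh s).deriv]
      have h2 := (main s).2
      have he := Real.exp_pos (2 * k * s)
      rw [hV]
      nlinarith [h2, he.le, mul_le_mul_of_nonneg_left h2 he.le]
  have h1 : Real.exp (2 * k * t) * V t ≤ Real.exp (2 * k * 0) * V 0 := hanti ht
  rw [mul_zero, Real.exp_zero, one_mul] at h1
  have he := Real.exp_pos (2 * k * t)
  have hexpneg : Real.exp (-2 * k * t) = (Real.exp (2 * k * t))⁻¹ := by
    rw [show (-2) * k * t = -(2 * k * t) by ring, Real.exp_neg]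
  have h2 : (∫ x in (0:ℝ)..L, (z t x - r) ⬝ᵥ (z t x - r)) = 2 * V t := by
    rw [hV]; ring
  have h3 : (∫ x in (0:ℝ)..L, (z 0 x - r) ⬝ᵥ (z 0 x - r)) = 2 * V 0 := by
    rw [hV]; ring
  rw [h2, h3, hexpneg, inv_mul_eq_div, le_div_iff₀ he]
  nlinarith [h1, he.le]
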